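/- arXiv:2004.09709 — 3 statements merged into one kernel-verified Lean document; each statement's English description precedes it below -/
import Mathlib

section
/- Consider the hub model on n nodes with hub set {1,…,n_L}, n_L < n, with parameters ρ ∈ (0,1)^{n_L} summing to 1 and A ∈ [0,1]^{n_L×n} with A_{ii} = 1 for all i ≤ n_L. A single group G ∈ {0,1}^n is generated by first drawing a hub i with probability ρ_i and then including each node j independently with probability A_{ij}. Assume: (i) 0 < ρ_i < 1 for all i; (ii) A_{ij} < 1 for all i ≤ n_L, j ≤ n with i ≠ j; (iii) for every pair i ≠ i' of hubs there exists a follower k ∈ {n_L+1,…,n} with A_{ik} ≠ A_{i'k}. Then the parameters are identifiable: if (ρ̃, Ã) is any parameter pair in the same parameter space (with Ã_{ii}=1) inducing the same distribution on {0,1}^n, then ρ̃ = ρ and Ã = A. -/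
/-- Probability of observing the group `g` under the hub model with
hub probabilities `ρ` and membership matrix `A`. -/
noncomputable def hubModelProb {n nL : ℕ} (ρ : Fin nL → ℝ)
    (A : Fin nL → Fin n → ℝ) (g : Fin n → Bool) : ℝ :=
  ∑ i : Fin nL, ρ i * ∏ j : Fin n, (if g j then A i j else 1 - A i j)

namespace HubAux

/-- Per-coordinate factor after integrating out a coordinate according to a mask. -/
def fac (o : Option Bool) (x : ℝ) : ℝ := o.elim 1 fun b => if b then x else 1 - x

@[simp] lemma fac_none (x : ℝ) : fac none x = 1 := rfl
@[simp] lemma fac_true (x : ℝ) : fac (some true) x = x := rfl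
@[simp] lemma fac_false (x : ℝ) : fac (some false) x = 1 - x := rfl

/-- Per-coordinate weight used to select/sum coordinates of `g`. -/
def wt (o : Option Bool) (b : Bool) : ℝ := o.elim 1 fun b' => if b = b' then 1 else 0

lemma fac_nonneg (o : Option Bool) {x : ℝ} (h0 : 0 ≤ x) (h1 : x ≤ 1) : 0 ≤ fac o x := by
  rcases o with _ | (_ | _) <;> simp [fac] <;> linarith

lemma transform {n nL : ℕ} (ρ : Fin nL → ℝ) (A : Fin nL → Fin n → ℝ)
    (s : Fin n → Option Bool) :
    ∑ g : Fin n → Bool, hubModelProb ρ A g * ∏ j, wt (s j) (g j)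
      = ∑ i, ρ i * ∏ j, fac (s j) (A i j) := by
  unfold hubModelProb
  simp_rw [Finset.sum_mul, mul_assoc, ← Finset.prod_mul_distrib]
  rw [Finset.sum_comm]
  refine Finset.sum_congr rfl fun i _ => ?_
  rw [← Finset.mul_sum]
  congr 1
  have key := Finset.prod_univ_sum (fun _ : Fin n => (Finset.univ : Finset Bool))
      (fun j b => (if b then A i j else 1 - A i j) * wt (s j) b)
  rw [Fintype.piFinset_univ] at key
  rw [← key]
  refine Finset.prod_congr rfl fun j _ => ?_
  rcases hsj : s j with _ | (_ | _) <;> simp [wt, fac]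

lemma prod_fac_update {n : ℕ} (s : Fin n → Option Bool) (k : Fin n) (o : Option Bool)
    (B : Fin n → ℝ) :
    ∏ j, fac (Function.update s k o j) (B j)
      = fac o (B k) * ∏ j ∈ Finset.univ.erase k, fac (s j) (B j) := by
  rw [← Finset.mul_prod_erase Finset.univ _ (Finset.mem_univ k), Function.update_self]
  congr 1
  exact Finset.prod_congr rfl fun j hj => by
    rw [Function.update_of_ne (Finset.ne_of_mem_erase hj)]

end HubAux

open HubAux in
theorem stmt_2 (n nL : ℕ) (hnL : nL < n)
    (ρ ρt : Fin nL → ℝ) (A At : Fin nL → Fin n → ℝ)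
    -- true parameters lie in the parameter space
    (hρ : ∀ i, 0 < ρ i ∧ ρ i < 1) (hρsum : ∑ i, ρ i = 1)
    (hA01 : ∀ i j, 0 ≤ A i j ∧ A i j ≤ 1)
    (hAdiag : ∀ i, A i (Fin.castLE hnL.le i) = 1)
    -- condition (ii)
    (hAlt : ∀ i j, j ≠ Fin.castLE hnL.le i → A i j < 1)
    -- condition (iii)
    (hsep : ∀ i i' : Fin nL, i ≠ i' → ∃ k : Fin n, nL ≤ (k : ℕ) ∧ A i k ≠ A i' k)
    -- candidate parameters lie in the parameter space
    (hρt : ∀ i, 0 ≤ ρt i ∧ ρt i ≤ 1) (hρtsum : ∑ i, ρt i = 1)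
    (hAt01 : ∀ i j, 0 ≤ At i j ∧ At i j ≤ 1)
    (hAtdiag : ∀ i, At i (Fin.castLE hnL.le i) = 1)
    -- same induced distribution on {0,1}^n
    (hsame : ∀ g : Fin n → Bool, hubModelProb ρt At g = hubModelProb ρ A g) :
    ρt = ρ ∧ At = A := by
  classical
  set ι : Fin nL → Fin n := Fin.castLE hnL.le with hι
  have hιinj : Function.Injective ι := Fin.castLE_injective _
  -- the master identity
  have master : ∀ s : Fin n → Option Bool,
      ∑ i, ρt i * ∏ j, fac (s j) (At i j) = ∑ i, ρ i * ∏ j, fac (s j) (A i j) := by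
    intro s
    rw [← HubAux.transform, ← HubAux.transform]
    exact Finset.sum_congr rfl fun g _ => by rw [hsame]
  -- the basic masks
  set s₀ : Fin nL → Fin n → Option Bool :=
    fun i j => if (j : ℕ) < nL then some (decide (j = ι i)) else none with hs₀def
  have hs₀hub : ∀ i i'' : Fin nL, s₀ i (ι i'') = some (decide (i'' = i)) := by
    intro i i''
    have h1 : ((ι i'' : Fin n) : ℕ) < nL := by
      rw [hι, Fin.coe_castLE]; exact i''.isLt
    rw [hs₀def]
    simp only [if_pos h1]
    congr 1
    exact decide_eq_decide.mpr hιinj.eq_iff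
  have hs₀k : ∀ i (k : Fin n), nL ≤ (k : ℕ) → s₀ i k = none := by
    intro i k hk
    rw [hs₀def]
    exact if_neg (not_lt.2 hk)
  have hιk : ∀ (i'' : Fin nL) (k : Fin n), nL ≤ (k : ℕ) → ι i'' ≠ k := by
    intro i'' k hk h
    have h1 : ((ι i'' : Fin n) : ℕ) < nL := by rw [hι, Fin.coe_castLE]; exact i''.isLt
    rw [h] at h1; omega
  -- vanishing of rows whose own coordinate is masked to `false`
  have hvanish : ∀ (B : Fin nL → Fin n → ℝ), (∀ i, B i (ι i) = 1) →
      ∀ (s : Fin n → Option Bool) (i'' : Fin nL), s (ι i'') = some false →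
      ∏ j, fac (s j) (B i'' j) = 0 := by
    intro B hd s i'' hs
    refine Finset.prod_eq_zero (Finset.mem_univ (ι i'')) ?_
    rw [hs, hd]; simp
  have key_single : ∀ (B : Fin nL → Fin n → ℝ), (∀ i, B i (ι i) = 1) →
      ∀ (r : Fin nL → ℝ) (s : Fin n → Option Bool) (i : Fin nL),
      (∀ i'', i'' ≠ i → s (ι i'') = some false) →
      ∑ i'', r i'' * ∏ j, fac (s j) (B i'' j) = r i * ∏ j, fac (s j) (B i j) := by
    intro B hd r s i hs
    exact Fintype.sum_eq_single i fun b hb => by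
      rw [hvanish B hd s b (hs b hb), mul_zero]
  have hs₀false : ∀ (i i'' : Fin nL), i'' ≠ i → s₀ i (ι i'') = some false := by
    intro i i'' h
    rw [hs₀hub]
    exact congrArg some (decide_eq_false h)
  -- the single-hub equation
  have eq1 : ∀ i, ρt i * ∏ j, fac (s₀ i j) (At i j) = ρ i * ∏ j, fac (s₀ i j) (A i j) := by
    intro i
    have h := master (s₀ i)
    rwa [key_single At hAtdiag ρt _ i (hs₀false i), key_single A hAdiag ρ _ i (hs₀false i)] at h
  -- positivity of the true single-hub product
  have hQpos : ∀ i, 0 < ∏ j, fac (s₀ i j) (A i j) := by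
    intro i
    refine Finset.prod_pos fun j _ => ?_
    by_cases hj : (j : ℕ) < nL
    · rw [hs₀def]; simp only [if_pos hj]
      by_cases hje : j = ι i
      · rw [decide_eq_true hje, fac_true, hje, hAdiag]; norm_num
      · rw [decide_eq_false hje, fac_false]
        have := hAlt i j hje; linarith
    · rw [hs₀def]; simp only [if_neg hj, fac_none]; norm_num
  have hcpos : ∀ i, 0 < ρ i * ∏ j, fac (s₀ i j) (A i j) :=
    fun i => mul_pos (hρ i).1 (hQpos i)
  -- follower columns agree
  have eqF : ∀ i (k : Fin n), nL ≤ (k : ℕ) → At i k = A i k := by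
    intro i k hk
    have hnone : s₀ i k = none := hs₀k i k hk
    have hvan : ∀ i'', i'' ≠ i → Function.update (s₀ i) k (some true) (ι i'') = some false := by
      intro i'' h
      rw [Function.update_of_ne (hιk i'' k hk)]
      exact hs₀false i i'' h
    have h := master (Function.update (s₀ i) k (some true))
    rw [key_single At hAtdiag ρt _ i hvan, key_single A hAdiag ρ _ i hvan,
      prod_fac_update, prod_fac_update] at h
    simp only [fac_true] at h
    have hQe : ∏ j, fac (s₀ i j) (A i j) = ∏ j ∈ Finset.univ.erase k, fac (s₀ i j) (A i j) := by
      rw [← Finset.mul_prod_erase Finset.univ _ (Finset.mem_univ k), hnone, fac_none, one_mul]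
    have hQte : ∏ j, fac (s₀ i j) (At i j)
        = ∏ j ∈ Finset.univ.erase k, fac (s₀ i j) (At i j) := by
      rw [← Finset.mul_prod_erase Finset.univ _ (Finset.mem_univ k), hnone, fac_none, one_mul]
    have e1 := eq1 i
    rw [hQe, hQte] at e1
    have hpos : (0:ℝ) < ρ i * ∏ j ∈ Finset.univ.erase k, fac (s₀ i j) (A i j) := by
      rw [← hQe]; exact hcpos i
    have h3 : At i k * (ρ i * ∏ j ∈ Finset.univ.erase k, fac (s₀ i j) (A i j))
        = A i k * (ρ i * ∏ j ∈ Finset.univ.erase k, fac (s₀ i j) (A i j)) := by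
      linear_combination h - At i k * e1
    exact mul_right_cancel₀ (ne_of_gt hpos) h3
  -- hub columns agree
  have eqH : ∀ i i', i ≠ i' → At i (ι i') = A i (ι i') := by
    intro i i' hne
    obtain ⟨k, hk, hkne⟩ := hsep i i' hne
    have hii' : ι i ≠ ι i' := fun h => hne (hιinj h)
    -- the two-hub mask
    set s₂ : Fin n → Option Bool := Function.update (s₀ i) (ι i') (some true) with hs₂def
    have hs₂sym : s₂ = Function.update (s₀ i') (ι i) (some true) := by
      funext j
      by_cases h1 : j = ι i'
      · rw [hs₂def, h1, Function.update_self, Function.update_of_ne hii'.symm, hs₀hub,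
          decide_eq_true rfl]
      · by_cases h2 : j = ι i
        · rw [hs₂def, h2, Function.update_of_ne hii', Function.update_self, hs₀hub,
            decide_eq_true rfl]
        · rw [hs₂def, Function.update_of_ne h1, Function.update_of_ne h2, hs₀def]
          by_cases h3 : (j : ℕ) < nL
          · simp only [if_pos h3, decide_eq_false h1, decide_eq_false h2]
          · simp only [if_neg h3]
    have hs₂false : ∀ i'', i'' ≠ i → i'' ≠ i' → s₂ (ι i'') = some false := by
      intro i'' ha hb
      rw [hs₂def, Function.update_of_ne (fun h => hb (hιinj h))]
      exact hs₀false i i'' ha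
    have hs₂k : s₂ k = none := by
      rw [hs₂def, Function.update_of_ne (hιk i' k hk).symm]
      exact hs₀k i k hk
    -- sum over exactly the pair {i, i'}
    have key_pair : ∀ (B : Fin nL → Fin n → ℝ), (∀ x, B x (ι x) = 1) →
        ∀ (r : Fin nL → ℝ) (s : Fin n → Option Bool),
        (∀ i'', i'' ≠ i → i'' ≠ i' → s (ι i'') = some false) →
        ∑ i'', r i'' * ∏ j, fac (s j) (B i'' j)
          = r i * ∏ j, fac (s j) (B i j) + r i' * ∏ j, fac (s j) (B i' j) := by
      intro B hd r s hs
      have hzero : ∀ x ∈ Finset.univ, x ∉ ({i, i'} : Finset (Fin nL)) →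
          r x * ∏ j, fac (s j) (B x j) = 0 := by
        intro x _ hx
        simp only [Finset.mem_insert, Finset.mem_singleton, not_or] at hx
        rw [hvanish B hd s x (hs x hx.1 hx.2), mul_zero]
      rw [← Finset.sum_subset (Finset.subset_univ _) hzero, Finset.sum_pair hne]
    have h2 := master s₂
    rw [key_pair At hAtdiag ρt _ hs₂false, key_pair A hAdiag ρ _ hs₂false] at h2
    -- mask with additionally the separating follower k set to true
    have hvan3 : ∀ i'', i'' ≠ i → i'' ≠ i' →
        Function.update s₂ k (some true) (ι i'') = some false := by
      intro i'' ha hb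
      rw [Function.update_of_ne (hιk i'' k hk)]
      exact hs₂false i'' ha hb
    have h3 := master (Function.update s₂ k (some true))
    rw [key_pair At hAtdiag ρt _ hvan3, key_pair A hAdiag ρ _ hvan3,
      prod_fac_update, prod_fac_update, prod_fac_update, prod_fac_update] at h3
    simp only [fac_true] at h3
    have herase : ∀ (B : Fin nL → Fin n → ℝ) (x : Fin nL),
        ∏ j ∈ Finset.univ.erase k, fac (s₂ j) (B x j) = ∏ j, fac (s₂ j) (B x j) := by
      intro B x
      rw [← Finset.mul_prod_erase Finset.univ (fun j => fac (s₂ j) (B x j))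
        (Finset.mem_univ k), hs₂k, fac_none, one_mul]
    rw [herase At i, herase At i', herase A i, herase A i'] at h3
    rw [eqF i k hk, eqF i' k hk] at h3
    -- deduce equality of the `i`-terms
    have hzero : (ρt i * ∏ j, fac (s₂ j) (At i j) - ρ i * ∏ j, fac (s₂ j) (A i j))
        * (A i k - A i' k) = 0 := by
      linear_combination h3 - A i' k * h2
    have hu : ρt i * ∏ j, fac (s₂ j) (At i j) = ρ i * ∏ j, fac (s₂ j) (A i j) := by
      rcases mul_eq_zero.1 hzero with h | h
      · linarith
      · exact absurd (by linarith : A i k = A i' k) hkne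
    -- relate the pair product to the single product via the factor at ι i'
    have hφ : ∀ (B : Fin nL → Fin n → ℝ), ∏ j, fac (s₂ j) (B i j)
        = B i (ι i') * ∏ j ∈ Finset.univ.erase (ι i'), fac (s₀ i j) (B i j) := by
      intro B
      rw [hs₂def, prod_fac_update, fac_true]
    have hQ : ∀ (B : Fin nL → Fin n → ℝ), ∏ j, fac (s₀ i j) (B i j)
        = (1 - B i (ι i')) * ∏ j ∈ Finset.univ.erase (ι i'), fac (s₀ i j) (B i j) := by
      intro B
      rw [← Finset.mul_prod_erase Finset.univ _ (Finset.mem_univ (ι i')),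
        hs₀false i i' (Ne.symm hne), fac_false]
    have e1 := eq1 i
    rw [hQ At, hQ A] at e1
    rw [hφ At, hφ A] at hu
    -- now pure algebra
    have hsum : ρt i * ∏ j ∈ Finset.univ.erase (ι i'), fac (s₀ i j) (At i j)
        = ρ i * ∏ j ∈ Finset.univ.erase (ι i'), fac (s₀ i j) (A i j) := by
      linear_combination e1 + hu
    have hEpos : (0:ℝ) < ρ i * ∏ j ∈ Finset.univ.erase (ι i'), fac (s₀ i j) (A i j) := by
      have hc := hcpos i
      rw [hQ A] at hc
      have h1a : (0:ℝ) < 1 - A i (ι i') := by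
        have := hAlt i (ι i') hii'.symm; linarith
      nlinarith
    have hfin : At i (ι i') * (ρ i * ∏ j ∈ Finset.univ.erase (ι i'), fac (s₀ i j) (A i j))
        = A i (ι i') * (ρ i * ∏ j ∈ Finset.univ.erase (ι i'), fac (s₀ i j) (A i j)) := by
      linear_combination hu - At i (ι i') * hsum
    exact mul_right_cancel₀ (ne_of_gt hEpos) hfin
  -- assemble
  have hAeq : At = A := by
    funext i j
    by_cases hj : (j : ℕ) < nL
    · have hj' : j = ι ⟨(j : ℕ), hj⟩ := by
        rw [hι]; exact Fin.ext (by simp)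
      by_cases he : (⟨(j : ℕ), hj⟩ : Fin nL) = i
      · rw [hj', he, hAtdiag, hAdiag]
      · rw [hj']; exact eqH i _ (Ne.symm he)
    · exact eqF i j (not_lt.1 hj)
  refine ⟨funext fun i => ?_, hAeq⟩
  have e1 := eq1 i
  rw [hAeq] at e1
  exact mul_right_cancel₀ (ne_of_gt (hQpos i)) e1
end

section
/- Let x, x̃, y, ỹ be real numbers with y > 0, and let π_k, π_{k'}, A_k, A_{k'}, Ã_k, Ã_{k'} ∈ [0,1] with π_k ≠ A_k and π_{k'} ≠ A_{k'}. Suppose: x̃ + ỹ = x + y; x̃·π_k + ỹ·Ã_k = x·π_k + y·A_k; x̃·π_{k'} + ỹ·Ã_{k'} = x·π_{k'} + y·A_{k'}; and x̃·π_k·π_{k'} + ỹ·Ã_k·Ã_{k'} = x·π_k·π_{k'} + y·A_k·A_{k'}. If ỹ ≠ 0, then ỹ = y and x̃ = x. -/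
theorem stmt_13 (x xt y yt : ℝ) (hy : 0 < y)
    (πk πk' Ak Ak' Atk Atk' : ℝ)
    (hπk : 0 ≤ πk ∧ πk ≤ 1) (hπk' : 0 ≤ πk' ∧ πk' ≤ 1)
    (hAk : 0 ≤ Ak ∧ Ak ≤ 1) (hAk' : 0 ≤ Ak' ∧ Ak' ≤ 1)
    (hAtk : 0 ≤ Atk ∧ Atk ≤ 1) (hAtk' : 0 ≤ Atk' ∧ Atk' ≤ 1)
    (hne : πk ≠ Ak) (hne' : πk' ≠ Ak')
    (h0 : xt + yt = x + y)
    (h1 : xt * πk + yt * Atk = x * πk + y * Ak)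
    (h2 : xt * πk' + yt * Atk' = x * πk' + y * Ak')
    (h3 : xt * πk * πk' + yt * Atk * Atk' = x * πk * πk' + y * Ak * Ak')
    (hyt : yt ≠ 0) :
    yt = y ∧ xt = x := by
  have e1 : yt * Atk = yt * πk + y * (Ak - πk) := by linear_combination h1 - πk * h0
  have e2 : yt * Atk' = yt * πk' + y * (Ak' - πk') := by linear_combination h2 - πk' * h0
  have key : y * (Ak - πk) * (Ak' - πk') * (yt - y) = 0 := by
    linear_combination (-yt) * h3 + yt * Atk' * e1 + (yt * πk + y * (Ak - πk)) * e2 +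
      yt * πk * πk' * h0
  have h4 : (Ak - πk) ≠ 0 := sub_ne_zero.mpr (Ne.symm hne)
  have h5 : (Ak' - πk') ≠ 0 := sub_ne_zero.mpr (Ne.symm hne')
  have hyy : yt - y = 0 := by
    rcases mul_eq_zero.mp key with h | h
    · rcases mul_eq_zero.mp h with h' | h'
      · rcases mul_eq_zero.mp h' with h'' | h''
        · exact absurd h'' hy.ne'
        · exact absurd h'' h4
      · exact absurd h' h5
    · exact h
  constructor
  · linarith
  · linarith
end

section
/- Consider the hub model with a null component on n nodes with hub set {1,…,n_L}: P(G = g) = ρ₀ ∏_j π_j^{g_j}(1−π_j)^{1−g_j} + Σ_{i=1}^{n_L} ρ_i ∏_j A_{ij}^{g_j}(1−A_{ij})^{1−g_j}, where Σ_{i=0}^{n_L} ρ_i = 1 and A_{ii} = 1 for i = 1,…,n_L. Suppose the parameters are identified on the followers in the following sense: ρ̃₀∏_{j=1}^n(1−π̃_j) = ρ₀∏_{j=1}^n(1−π_j) and for each follower k ∈ {n_L+1,…,n}, ρ̃₀π̃_k∏_{j≠k}(1−π̃_j) = ρ₀π_k∏_{j≠k}(1−π_j). Then, if all π_j, π̃_j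 < 1 and ρ₀, ρ̃₀ > 0, it follows that π̃_k = π_k for all k = n_L+1,…,n, and ρ̃₀∏_{j=1}^{n_L}(1−π̃_j) = ρ₀∏_{j=1}^{n_L}(1−π_j). -/
theorem stmt_14 (n nL : ℕ) (hnn : nL ≤ n)
    (ρ₀ ρt₀ : ℝ) (hρ₀ : 0 < ρ₀) (hρt₀ : 0 < ρt₀)
    (π πt : Fin n → ℝ) (hπ : ∀ j, π j < 1) (hπt : ∀ j, πt j < 1)
    -- probability of the empty group matches
    (hempty : ρt₀ * ∏ j : Fin n, (1 - πt j) = ρ₀ * ∏ j : Fin n, (1 - π j))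
    -- probability of each follower singleton {k} matches
    (hsingle : ∀ k : Fin n, nL ≤ (k : ℕ) →
      ρt₀ * πt k * ∏ j ∈ Finset.univ.erase k, (1 - πt j) =
        ρ₀ * π k * ∏ j ∈ Finset.univ.erase k, (1 - π j)) :
    (∀ k : Fin n, nL ≤ (k : ℕ) → πt k = π k) ∧
      ρt₀ * ∏ j ∈ Finset.univ.filter (fun j : Fin n => (j : ℕ) < nL), (1 - πt j) =
        ρ₀ * ∏ j ∈ Finset.univ.filter (fun j : Fin n => (j : ℕ) < nL), (1 - π j) := by
  have hpos : ∀ j : Fin n, 0 < 1 - π j := fun j => by linarith [hπ j]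
  have hpost : ∀ j : Fin n, 0 < 1 - πt j := fun j => by linarith [hπt j]
  have key : ∀ k : Fin n, nL ≤ (k : ℕ) → πt k = π k := by
    intro k hk
    have h1 := hsingle k hk
    have he1 := (Finset.mul_prod_erase Finset.univ (fun j => (1 - πt j)) (Finset.mem_univ k)).symm
    have he2 := (Finset.mul_prod_erase Finset.univ (fun j => (1 - π j)) (Finset.mem_univ k)).symm
    rw [he1, he2] at hempty
    have hQpos : 0 < ∏ j ∈ Finset.univ.erase k, (1 - πt j) :=
      Finset.prod_pos (fun j _ => hpost j)
    have hsum : ρt₀ * ∏ j ∈ Finset.univ.erase k, (1 - πt j) =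
        ρ₀ * ∏ j ∈ Finset.univ.erase k, (1 - π j) := by
      linear_combination h1 + hempty
    have h1' : (ρt₀ * ∏ j ∈ Finset.univ.erase k, (1 - πt j)) * πt k =
        (ρt₀ * ∏ j ∈ Finset.univ.erase k, (1 - πt j)) * π k := by
      linear_combination h1 - π k * hsum
    exact mul_left_cancel₀ (by positivity) h1'
  refine ⟨key, ?_⟩
  have hsplit1 := (Finset.prod_filter_mul_prod_filter_not Finset.univ
      (fun j : Fin n => (j : ℕ) < nL) (fun j => (1 - πt j)))
  have hsplit2 := (Finset.prod_filter_mul_prod_filter_not Finset.univ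
      (fun j : Fin n => (j : ℕ) < nL) (fun j => (1 - π j)))
  have heqrest : ∏ j ∈ Finset.univ.filter (fun j : Fin n => ¬ (j : ℕ) < nL), (1 - πt j) =
      ∏ j ∈ Finset.univ.filter (fun j : Fin n => ¬ (j : ℕ) < nL), (1 - π j) := by
    apply Finset.prod_congr rfl
    intro j hj
    rw [key j (le_of_not_gt (Finset.mem_filter.mp hj).2)]
  have hRpos : 0 < ∏ j ∈ Finset.univ.filter (fun j : Fin n => ¬ (j : ℕ) < nL), (1 - π j) :=
    Finset.prod_pos (fun j _ => hpos j)
  apply mul_right_cancel₀ (ne_of_gt hRpos)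
  calc ρt₀ * (∏ j ∈ Finset.univ.filter (fun j : Fin n => (j : ℕ) < nL), (1 - πt j)) *
        ∏ j ∈ Finset.univ.filter (fun j : Fin n => ¬ (j : ℕ) < nL), (1 - π j)
      = ρt₀ * ∏ j : Fin n, (1 - πt j) := by
        rw [← heqrest, mul_assoc, hsplit1]
    _ = ρ₀ * ∏ j : Fin n, (1 - π j) := hempty
    _ = _ := by rw [← hsplit2, mul_assoc]
end
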